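/- Let (W,S) be a Coxeter system and T ⊆ S. Then R(W) ∩ W_T = R(W_T); that is, an element r of the standard parabolic subgroup W_T is conjugate in W to some generator s ∈ S if and only if r = w t w⁻¹ for some w ∈ W_T and t ∈ T. -/

import Mathlib

namespace ReflParaAux

open List CoxeterSystem

variable {B W : Type*} [Group W] [DecidableEq W] {M : CoxeterMatrix B}
  (cs : CoxeterSystem M W)

/-- Building block of the reflection-permutation representation. -/
def fS (i : B) : Function.End (W × ZMod 2) :=
  fun x => (cs.simple i * x.1 * cs.simple i,
    x.2 + (if x.1 = cs.simple i then 1 else 0))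

theorem prod_map_fS (ω : List B) (x : W × ZMod 2) :
    (List.map (fS cs) ω).prod x =
      (cs.wordProd ω * x.1 * (cs.wordProd ω)⁻¹,
        x.2 + (((cs.rightInvSeq ω).count x.1 : ℕ) : ZMod 2)) := by
  induction ω generalizing x with
  | nil => simp [CoxeterSystem.rightInvSeq]; rfl
  | cons i ω ih =>
    have hmul : (List.map (fS cs) (i :: ω)).prod x
        = fS cs i ((List.map (fS cs) ω).prod x) := by
      simp [List.prod_cons]
      rfl
    rw [hmul, ih]
    dsimp [fS, CoxeterSystem.rightInvSeq]
    rw [cs.wordProd_cons]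
    have hiff : (cs.wordProd ω * x.1 * (cs.wordProd ω)⁻¹ = cs.simple i)
        ↔ ((cs.wordProd ω)⁻¹ * cs.simple i * cs.wordProd ω = x.1) := by
      constructor
      · intro h; rw [← h]; group
      · intro h; rw [← h]; group
    apply Prod.ext
    · show cs.simple i * _ * cs.simple i = _
      rw [mul_inv_rev, cs.inv_simple]; group
    · show _ + _ + _ = _
      rw [List.count_cons]
      by_cases h : cs.wordProd ω * x.1 * (cs.wordProd ω)⁻¹ = cs.simple i
      · rw [if_pos h, if_pos (by simpa using hiff.mp h)]
        push_cast; ring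
      · rw [if_neg h, if_neg (by simpa using fun hc => h (hiff.mpr hc))]
        push_cast; ring

theorem comm_aux {x q : W} (hx : x * q = q⁻¹ * x) (c : ℕ) : x * q ^ c = (q ^ c)⁻¹ * x := by
  induction c with
  | zero => simp
  | succ c ih =>
    rw [pow_succ', ← mul_assoc, hx, mul_assoc, ih, mul_inv_rev, ← mul_assoc, ← inv_pow, ← pow_succ', ← pow_succ]

theorem key_swap (i j : B) (n : ℕ) :
    cs.simple (if Even (n + M i j) then j else i) * cs.wordProd (alternatingWord i j (M i j))
      = cs.wordProd (alternatingWord i j (M i j)) * cs.simple (if Even n then j else i) := by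
  set m := M i j with hm
  set q := cs.simple i * cs.simple j with hqdef
  have hq : q ^ m = 1 := cs.simple_mul_simple_pow i j
  have hxj : cs.simple j * q = q⁻¹ * cs.simple j := by
    rw [hqdef, mul_inv_rev, cs.inv_simple, cs.inv_simple]; group
  have hxi : cs.simple i * q = q⁻¹ * cs.simple i := by
    rw [hqdef, mul_inv_rev, cs.inv_simple, cs.inv_simple, ← mul_assoc, cs.simple_mul_simple_self,
      one_mul, mul_assoc, cs.simple_mul_simple_self, mul_one]
  have l3 : cs.simple j * cs.simple i = q⁻¹ := by
    rw [hqdef, mul_inv_rev, cs.inv_simple, cs.inv_simple]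
  rw [cs.prod_alternatingWord_eq_mul_pow]
  rcases Nat.even_or_odd m with hme | hmo
  · obtain ⟨c, hc⟩ := hme
    have hme : Even m := ⟨c, hc⟩
    have hc' : m / 2 = c := by omega
    have h2c : q ^ c * q ^ c = 1 := by
      rw [← pow_add]
      have h : c + c = m := by omega
      rw [h, hq]
    have hinv : (q ^ c)⁻¹ = q ^ c := inv_eq_of_mul_eq_one_right h2c
    have hpar : Even (n + m) ↔ Even n := by
      simp [Nat.even_add, hme]
    rw [if_pos hme]
    simp only [one_mul, hc']
    rcases Nat.even_or_odd n with hne | hno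
    · rw [if_pos (hpar.mpr hne), if_pos hne, comm_aux hxj, hinv]
    · rw [if_neg (fun h => (Nat.not_even_iff_odd.mpr hno) (hpar.mp h)),
        if_neg (Nat.not_even_iff_odd.mpr hno), comm_aux hxi, hinv]
  · obtain ⟨c, hc⟩ := hmo
    have hparm : ¬ Even m := by rw [Nat.not_even_iff_odd]; exact ⟨c, hc⟩
    have hc' : m / 2 = c := by omega
    have hinv : (q ^ c)⁻¹ = q ^ (c + 1) := by
      apply inv_eq_of_mul_eq_one_left
      rw [← pow_add]
      have h : c + 1 + c = m := by omega
      rw [h, hq]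
    have hpar : Even (n + m) ↔ ¬ Even n := by
      simp [Nat.even_add, hparm, Nat.not_even_iff_odd]
    rw [if_neg hparm, hc']
    rcases Nat.even_or_odd n with hne | hno
    · rw [if_neg (fun h => (hpar.mp h) hne), if_pos hne]
      have lhs : cs.simple i * (cs.simple j * q ^ c) = q ^ (c + 1) := by
        rw [← mul_assoc, ← hqdef, ← pow_succ']
      have rhs : cs.simple j * q ^ c * cs.simple j = q ^ (c + 1) := by
        rw [comm_aux hxj, mul_assoc, cs.simple_mul_simple_self, mul_one, hinv]
      rw [lhs, rhs]
    · rw [if_pos (hpar.mpr (Nat.not_even_iff_odd.mpr hno)),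
        if_neg (Nat.not_even_iff_odd.mpr hno)]
      have lhs : cs.simple j * (cs.simple j * q ^ c) = q ^ c := by
        rw [← mul_assoc, cs.simple_mul_simple_self, one_mul]
      have rhs : cs.simple j * q ^ c * cs.simple i = q ^ c := by
        rw [comm_aux hxj, mul_assoc, l3, ← mul_inv_rev, ← pow_succ', ← hinv, inv_inv]
      rw [lhs, rhs]

theorem wordProd_alt_add (i j : B) (n : ℕ) :
    cs.wordProd (alternatingWord i j (n + M i j)) =
      cs.wordProd (alternatingWord i j (M i j)) * cs.wordProd (alternatingWord i j n) := by
  induction n with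
  | zero => simp [CoxeterSystem.alternatingWord]
  | succ n ih =>
    have h : n + 1 + M i j = (n + M i j) + 1 := by omega
    rw [h, alternatingWord_succ', cs.wordProd_cons, ih,
      alternatingWord_succ' i j n, cs.wordProd_cons, ← mul_assoc, key_swap, mul_assoc]

theorem drop_alternatingWord (i j : B) (n d : ℕ) :
    (alternatingWord i j n).drop d = alternatingWord i j (n - d) := by
  induction n generalizing d i j with
  | zero => simp [alternatingWord]
  | succ n ih =>
    cases d with
    | zero => simp
    | succ d =>
      rw [alternatingWord_succ', List.drop_succ_cons, ih]
      congr 1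
      omega

theorem ris_alt_getD (i j : B) (N k : ℕ) (hk : k < N) :
    (cs.rightInvSeq (alternatingWord i j N)).getD k 1 =
      (cs.wordProd (alternatingWord i j (N - (k + 1))))⁻¹
        * cs.wordProd (alternatingWord i j (N - k)) := by
  rw [cs.getD_rightInvSeq, drop_alternatingWord]
  have h1 : N - k = (N - (k + 1)) + 1 := by omega
  have hget : (alternatingWord i j N)[k]?
      = some (if Even (N - (k + 1)) then j else i) := by
    have hd := List.getElem?_drop (xs := alternatingWord i j N) (i := k) (j := 0)
    rw [Nat.add_zero] at hd
    rw [← hd, drop_alternatingWord, h1, alternatingWord_succ']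
    rfl
  rw [hget]
  simp only [Option.map_some, Option.getD_some]
  rw [mul_assoc]
  congr 1
  rw [h1, alternatingWord_succ', cs.wordProd_cons]

theorem ris_alt_take_eq_drop (i j : B) :
    (cs.rightInvSeq (alternatingWord i j (2 * M i j))).take (M i j)
      = (cs.rightInvSeq (alternatingWord i j (2 * M i j))).drop (M i j) := by
  set m := M i j with hm
  have hlen : (cs.rightInvSeq (alternatingWord i j (2 * m))).length = 2 * m := by
    rw [cs.length_rightInvSeq, length_alternatingWord]
  apply List.ext_getElem
  · simp [hlen]; omega
  · intro k h1 h2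
    rw [List.getElem_take, List.getElem_drop]
    rw [List.length_take, hlen] at h1
    have hk : k < m := by omega
    rw [← List.getD_eq_getElem _ 1, ← List.getD_eq_getElem _ 1]
    rw [ris_alt_getD cs i j _ k (by omega), ris_alt_getD cs i j _ (m + k) (by omega)]
    have e1 : 2 * m - (k + 1) = (m - (k + 1)) + m := by omega
    have e2 : 2 * m - k = (m - k) + m := by omega
    have e3 : 2 * m - (m + k + 1) = m - (k + 1) := by omega
    have e4 : 2 * m - (m + k) = m - k := by omega
    rw [e1, e2, e3, e4, wordProd_alt_add, wordProd_alt_add, mul_inv_rev, mul_assoc]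
    congr 1
    rw [← mul_assoc, inv_mul_cancel, one_mul]

theorem count_ris_alt_even (i j : B) (t : W) :
    (((cs.rightInvSeq (alternatingWord i j (2 * M i j))).count t : ℕ) : ZMod 2) = 0 := by
  have hsplit := List.take_append_drop (M i j)
    (cs.rightInvSeq (alternatingWord i j (2 * M i j)))
  conv_lhs => rw [← hsplit]
  rw [List.count_append, ← ris_alt_take_eq_drop]
  push_cast
  have h2 : ∀ z : ZMod 2, z + z = 0 := by decide
  exact h2 _

theorem alt_two_mul (i j : B) (m : ℕ) :
    alternatingWord i j (2 * (m + 1)) = i :: j :: alternatingWord i j (2 * m) := by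
  have h1 : 2 * (m + 1) = (2 * m + 1) + 1 := by omega
  rw [h1, alternatingWord_succ', if_neg (by simp [Nat.even_add_one, parity_simps]),
    alternatingWord_succ', if_pos (by simp)]

theorem pow_eq_prod_map_fS (i j : B) (m : ℕ) :
    (fS cs i * fS cs j) ^ m = (List.map (fS cs) (alternatingWord i j (2 * m))).prod := by
  induction m with
  | zero => simp [CoxeterSystem.alternatingWord]
  | succ m ih =>
    rw [alt_two_mul, pow_succ', ih]
    simp [List.prod_cons, mul_assoc]

theorem isLiftable_fS : M.IsLiftable (fS cs) := by
  intro i j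
  rw [pow_eq_prod_map_fS]
  funext x
  have h := prod_map_fS cs (alternatingWord i j (2 * M i j)) x
  have hπ : cs.wordProd (alternatingWord i j (2 * M i j)) = 1 := by
    rw [cs.prod_alternatingWord_eq_mul_pow, if_pos (by simp),
      Nat.mul_div_cancel_left _ (by norm_num : 0 < 2), one_mul]
    exact cs.simple_mul_simple_pow i j
  rw [h, hπ, count_ris_alt_even]
  simp
  rfl

/-- The reflection-permutation representation. -/
def Phi : W →* Function.End (W × ZMod 2) := cs.lift ⟨fS cs, isLiftable_fS cs⟩

theorem Phi_wordProd (ω : List B) (x : W × ZMod 2) :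
    Phi cs (cs.wordProd ω) x =
      (cs.wordProd ω * x.1 * (cs.wordProd ω)⁻¹,
        x.2 + (((cs.rightInvSeq ω).count x.1 : ℕ) : ZMod 2)) := by
  have key : Phi cs (cs.wordProd ω) = (List.map (fS cs) ω).prod := by
    induction ω with
    | nil => simp
    | cons i ω ih =>
      have hs : Phi cs (cs.simple i) = fS cs i :=
        cs.lift_apply_simple (isLiftable_fS cs) i
      rw [cs.wordProd_cons, map_mul, List.map_cons, List.prod_cons, ih, hs]
  rw [key, prod_map_fS]

/-- The "reflection cocycle" evaluated as an element of `ZMod 2`. -/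
def nn (w t : W) : ZMod 2 := (Phi cs w (t, 0)).2

theorem Phi_apply (w : W) (x : W × ZMod 2) :
    Phi cs w x = (w * x.1 * w⁻¹, x.2 + nn cs w x.1) := by
  obtain ⟨ω, rfl⟩ := cs.wordProd_surjective w
  rw [Phi_wordProd]
  congr 1
  rw [nn, Phi_wordProd]
  simp

theorem nn_wordProd (ω : List B) (t : W) :
    nn cs (cs.wordProd ω) t = (((cs.rightInvSeq ω).count t : ℕ) : ZMod 2) := by
  rw [nn, Phi_wordProd]
  simp

theorem nn_mul (w w' t : W) :
    nn cs (w * w') t = nn cs w' t + nn cs w (w' * t * w'⁻¹) := by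
  have h : Phi cs (w * w') (t, 0) = Phi cs w (Phi cs w' (t, 0)) := by
    rw [map_mul]; rfl
  rw [nn, h, Phi_apply cs w', Phi_apply cs w]
  simp [nn]

theorem nn_one (t : W) : nn cs 1 t = 0 := by
  have h := nn_wordProd cs [] t
  simpa [CoxeterSystem.rightInvSeq] using h

theorem nn_simple (i : B) : nn cs (cs.simple i) (cs.simple i) = 1 := by
  have h := nn_wordProd cs [i] (cs.simple i)
  simp only [cs.wordProd_singleton] at h
  rw [h]
  simp [CoxeterSystem.rightInvSeq, List.count_cons]

theorem nn_inv (w t : W) : nn cs w⁻¹ (w * t * w⁻¹) = nn cs w t := by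
  have h := nn_mul cs w⁻¹ w t
  rw [inv_mul_cancel, nn_one] at h
  have h2 : ∀ z z' : ZMod 2, 0 = z + z' → z' = z := by decide
  exact h2 _ _ h

theorem nn_self_of_isReflection {t : W} (ht : cs.IsReflection t) : nn cs t t = 1 := by
  obtain ⟨u, b, rfl⟩ := ht
  have harg : cs.simple b * u⁻¹ * (u * cs.simple b * u⁻¹) * (cs.simple b * u⁻¹)⁻¹
      = cs.simple b := by
    rw [mul_inv_rev, cs.inv_simple, inv_inv]
    simp [mul_assoc, cs.simple_mul_simple_self]
  have harg2 : u⁻¹ * (u * cs.simple b * u⁻¹) * u⁻¹⁻¹ = cs.simple b := by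
    group
  have key1 := nn_mul cs u (cs.simple b * u⁻¹) (u * cs.simple b * u⁻¹)
  have hw : u * (cs.simple b * u⁻¹) = u * cs.simple b * u⁻¹ := (mul_assoc u _ _).symm
  rw [hw, harg] at key1
  have key2 := nn_mul cs (cs.simple b) u⁻¹ (u * cs.simple b * u⁻¹)
  rw [harg2, nn_simple] at key2
  have key3 := nn_inv cs u (cs.simple b)
  rw [key1, key2, key3]
  have h2 : ∀ z z' : ZMod 2, z + 1 + z = 1 := by decide
  exact h2 _ (0 : ZMod 2)

/-- Strong exchange property. -/
theorem mem_ris_of_lt (ω : List B) (hω : cs.IsReduced ω) {t : W} (ht : cs.IsReflection t)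
    (hlt : cs.length (cs.wordProd ω * t) < cs.length (cs.wordProd ω)) :
    t ∈ cs.rightInvSeq ω := by
  by_contra hmem
  have h0 : nn cs (cs.wordProd ω) t = 0 := by
    rw [nn_wordProd, List.count_eq_zero_of_not_mem hmem]
    simp
  obtain ⟨ω', hred', hw'⟩ := cs.exists_reduced_word' (cs.wordProd ω * t)
  have hnot : t ∉ cs.rightInvSeq ω' := by
    intro hm
    have h := (cs.isRightInversion_of_mem_rightInvSeq hred' hm).2
    have e1 : cs.wordProd ω' * t = cs.wordProd ω := by
      rw [← hw', mul_assoc, ht.mul_self, mul_one]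
    rw [e1] at h
    rw [hw'] at hlt
    omega
  have h0' : nn cs (cs.wordProd ω') t = 0 := by
    rw [nn_wordProd, List.count_eq_zero_of_not_mem hnot]
    simp
  have hmul := nn_mul cs (cs.wordProd ω * t) t t
  have harg : t * t * t⁻¹ = t := by rw [ht.mul_self, one_mul, ht.inv]
  have hsplit : cs.wordProd ω * t * t = cs.wordProd ω := by
    rw [mul_assoc, ht.mul_self, mul_one]
  rw [hsplit, harg, nn_self_of_isReflection cs ht, hw', h0', h0] at hmul
  exact absurd hmul (by decide)

/-- Any word contains a reduced word of the same product among its letters. -/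
theorem exists_reduced_subword : ∀ (N : ℕ) (ω : List B), ω.length ≤ N →
    ∃ ω' : List B, cs.IsReduced ω' ∧ cs.wordProd ω' = cs.wordProd ω ∧ ∀ b ∈ ω', b ∈ ω := by
  intro N
  induction N with
  | zero =>
    intro ω hlen
    have hω : ω = [] := List.eq_nil_of_length_eq_zero (by omega)
    subst hω
    exact ⟨[], by simp [CoxeterSystem.IsReduced], rfl, by simp⟩
  | succ N ih =>
    intro ω hlen
    by_cases hred : cs.IsReduced ω
    · exact ⟨ω, hred, rfl, fun b hb => hb⟩
    classical
    have hne : ω ≠ [] := by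
      rintro rfl
      exact hred (by simp [CoxeterSystem.IsReduced])
    have hlen1 : 1 ≤ ω.length := List.length_pos_iff.mpr hne
    have hwit : ¬ cs.IsReduced (ω.take (ω.length - 1 + 1)) := by
      rw [Nat.sub_add_cancel hlen1, List.take_length]
      exact hred
    have hex : ∃ n, ¬ cs.IsReduced (ω.take (n + 1)) := ⟨ω.length - 1, hwit⟩
    set j := Nat.find hex with hjdef
    have hj : ¬ cs.IsReduced (ω.take (j + 1)) := Nat.find_spec hex
    have hjle : j ≤ ω.length - 1 := Nat.find_le hwit
    have hjlt : j < ω.length := by omega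
    have hjred : cs.IsReduced (ω.take j) := by
      rcases Nat.eq_zero_or_pos j with h0 | hpos
      · rw [h0]
        simp [CoxeterSystem.IsReduced]
      · have hmin := Nat.find_min hex (m := j - 1) (by omega)
        have e : j - 1 + 1 = j := by omega
        rw [e] at hmin
        exact not_not.mp hmin
    set b := ω.get ⟨j, hjlt⟩ with hbdef
    have htake : ω.take (j + 1) = ω.take j ++ [b] := by
      rw [List.take_succ]
      congr 1
      rw [List.getElem?_eq_getElem hjlt]
      rfl
    have hπtake : cs.wordProd (ω.take (j + 1))
        = cs.wordProd (ω.take j) * cs.simple b := by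
      rw [htake, cs.wordProd_append, cs.wordProd_singleton]
    have hlentake : (ω.take j).length = j := by
      rw [List.length_take]
      omega
    have hℓ : cs.length (cs.wordProd (ω.take j)) = j := by
      rw [hjred, hlentake]
    rcases cs.length_mul_simple (cs.wordProd (ω.take j)) b with hup | hdown
    · exfalso
      apply hj
      show cs.length (cs.wordProd (ω.take (j + 1))) = (ω.take (j + 1)).length
      rw [hπtake, hup, hℓ, List.length_take]
      omega
    · have hj0 : j ≠ 0 := by
        intro h0
        rw [h0] at hdown
        simp only [List.take_zero, CoxeterSystem.wordProd_nil, one_mul,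
          cs.length_simple, cs.length_one] at hdown
        omega
      have hlt : cs.length (cs.wordProd (ω.take j) * cs.simple b)
          < cs.length (cs.wordProd (ω.take j)) := by
        omega
      have hmem := mem_ris_of_lt cs (ω.take j) hjred (cs.isReflection_simple b) hlt
      obtain ⟨k, hk, hkeq⟩ := List.mem_iff_getElem.mp hmem
      have hkd : ((cs.rightInvSeq (ω.take j)).getD k 1) = cs.simple b := by
        rw [List.getD_eq_getElem _ _ hk]
        exact hkeq
      have herase := cs.wordProd_mul_getD_rightInvSeq (ω.take j) k
      rw [hkd] at herase
      set ω2 := (ω.take j).eraseIdx k ++ ω.drop (j + 1) with hω2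
      have hπ2 : cs.wordProd ω2 = cs.wordProd ω := by
        rw [hω2, cs.wordProd_append, ← herase, ← hπtake, ← cs.wordProd_append,
          List.take_append_drop]
      have hk' : k < (ω.take j).length := by
        rw [cs.length_rightInvSeq] at hk
        exact hk
      have hkerase : ((ω.take j).eraseIdx k).length + 1 = (ω.take j).length :=
        List.length_eraseIdx_add_one hk'
      have hlen2 : ω2.length ≤ N := by
        rw [hω2, List.length_append, List.length_drop]
        omega
      obtain ⟨ω', h1, h2, h3⟩ := ih ω2 hlen2
      refine ⟨ω', h1, by rw [h2, hπ2], fun x hx => ?_⟩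
      have hx2 := h3 x hx
      rw [hω2] at hx2
      rcases List.mem_append.mp hx2 with h | h
      · exact List.take_subset j ω (List.eraseIdx_subset h)
      · exact List.drop_subset _ ω h

theorem wordProd_mem_closure {T : Set B} {ω : List B} (hω : ∀ b ∈ ω, b ∈ T) :
    cs.wordProd ω ∈ Subgroup.closure (cs.simple '' T) := by
  induction ω with
  | nil =>
    rw [cs.wordProd_nil]
    exact Subgroup.one_mem _
  | cons i ω ih =>
    rw [cs.wordProd_cons]
    exact mul_mem (Subgroup.subset_closure ⟨i, hω i (by simp), rfl⟩)
      (ih fun b hb => hω b (List.mem_cons_of_mem i hb))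

theorem exists_word_of_mem_closure {T : Set B} {r : W}
    (hr : r ∈ Subgroup.closure (cs.simple '' T)) :
    ∃ ω : List B, (∀ b ∈ ω, b ∈ T) ∧ cs.wordProd ω = r := by
  induction hr using Subgroup.closure_induction with
  | mem x hx =>
    obtain ⟨t, ht, rfl⟩ := hx
    exact ⟨[t], by simpa using ht, cs.wordProd_singleton t⟩
  | one => exact ⟨[], by simp, cs.wordProd_nil⟩
  | mul x y hx hy ihx ihy =>
    obtain ⟨ω1, h1, e1⟩ := ihx
    obtain ⟨ω2, h2, e2⟩ := ihy
    exact ⟨ω1 ++ ω2, fun b hb => (List.mem_append.mp hb).elim (h1 b) (h2 b),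
      by rw [cs.wordProd_append, e1, e2]⟩
  | inv x hx ihx =>
    obtain ⟨ω1, h1, e1⟩ := ihx
    exact ⟨ω1.reverse, fun b hb => h1 b (List.mem_reverse.mp hb),
      by rw [cs.wordProd_reverse, e1]⟩

end ReflParaAux

/-- Reflections are intrinsic to a Coxeter system: for `T ⊆ S`, an element of the standard
parabolic subgroup `W_T` is a reflection of `(W, S)` if and only if it is a reflection of the
Coxeter system `(W_T, T)`, i.e. has the form `w t w⁻¹` with `w ∈ W_T` and `t ∈ T`. -/
theorem reflections_of_parabolic {B W : Type*} [Group W] (M : CoxeterMatrix B)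
    (cs : CoxeterSystem M W) (T : Set B) (r : W)
    (hr : r ∈ Subgroup.closure (cs.simple '' T)) :
    cs.IsReflection r ↔
      ∃ w ∈ Subgroup.closure (cs.simple '' T), ∃ t ∈ T, r = w * cs.simple t * w⁻¹ := by
  letI : DecidableEq W := Classical.decEq W
  constructor
  · intro hrefl
    obtain ⟨ω0, hω0T, hω0⟩ := ReflParaAux.exists_word_of_mem_closure cs hr
    obtain ⟨ω, hred, hπ, hsub⟩ := ReflParaAux.exists_reduced_subword cs ω0.length ω0 le_rfl
    have hπr : cs.wordProd ω = r := by rw [hπ, hω0]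
    have hne : r ≠ 1 := by
      intro h
      have hodd := hrefl.odd_length
      rw [h, cs.length_one] at hodd
      exact (Nat.not_odd_iff_even.mpr (Even.zero)) hodd
    have hlt : cs.length (cs.wordProd ω * r) < cs.length (cs.wordProd ω) := by
      rw [hπr, hrefl.mul_self, cs.length_one]
      have h0 : cs.length r ≠ 0 := fun h => hne (cs.length_eq_zero_iff.mp h)
      omega
    have hmem := ReflParaAux.mem_ris_of_lt cs ω hred hrefl hlt
    obtain ⟨k, hk, hkeq⟩ := List.mem_iff_getElem.mp hmem
    have hk' : k < ω.length := by
      rw [cs.length_rightInvSeq] at hk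
      exact hk
    have hkd : (cs.rightInvSeq ω).getD k 1 = r := by
      rw [List.getD_eq_getElem _ _ hk]
      exact hkeq
    rw [cs.getD_rightInvSeq] at hkd
    have hget : ω[k]? = some (ω.get ⟨k, hk'⟩) := by
      rw [List.getElem?_eq_getElem hk']; rfl
    rw [hget] at hkd
    simp only [Option.map_some, Option.getD_some] at hkd
    have hmemT : ∀ b ∈ ω, b ∈ T := fun b hb => hω0T b (hsub b hb)
    refine ⟨(cs.wordProd (ω.drop (k + 1)))⁻¹, ?_, ω.get ⟨k, hk'⟩, ?_, ?_⟩
    · exact Subgroup.inv_mem _ (ReflParaAux.wordProd_mem_closure cs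
        (fun b hb => hmemT b (List.drop_subset _ _ hb)))
    · exact hmemT _ (List.get_mem ω ⟨k, hk'⟩)
    · rw [inv_inv]
      exact hkd.symm
  · rintro ⟨w, hw, t, ht, rfl⟩
    exact ⟨w, t, rfl⟩
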